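/- Let Ω = {x_1,...,x_m} be a finite set, F_1,...,F_n : Ω → ℝ with 1, F_1, ..., F_n linearly independent, and let E be the corresponding exponential family p_θ(x) = exp(C(x) + ∑_i θ_i F_i(x) − ψ(θ)). For X = a_0 + ∑_{i=1}^n a_i F_i in the span A_E, define f : E → ℝ by f(p) = E_p(X). Then the squared norm of the Riemannian gradient of f with respect to the Fisher metric h_F satisfies ‖grad^{h_F}(f)(p)‖² = V_p(X) for all p ∈ E (Cramér–Rao equality). -/

import Mathlib

open Finset Matrix

/-- The exponential family density `p_θ(x) = exp(C(x) + ∑ᵢ θᵢ Fᵢ(x) − ψ(θ))`, where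
`ψ(θ) = log ∑ₓ exp(C(x) + ∑ᵢ θᵢ Fᵢ(x))` is the log-partition function. -/
noncomputable def expFamDensity {m n : ℕ} (C : Fin m → ℝ) (F : Fin n → Fin m → ℝ)
    (θ : Fin n → ℝ) (x : Fin m) : ℝ :=
  Real.exp (C x + ∑ i, θ i * F i x -
    Real.log (∑ y, Real.exp (C y + ∑ i, θ i * F i y)))

/-- The Fisher metric of the exponential family in the natural coordinates `θ`:
`(h_F)_{ij}(θ) = Cov_{p_θ}(Fᵢ, Fⱼ)`. -/
noncomputable def fisherMatrix {m n : ℕ} (C : Fin m → ℝ) (F : Fin n → Fin m → ℝ)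
    (θ : Fin n → ℝ) : Matrix (Fin n) (Fin n) ℝ :=
  Matrix.of fun i j =>
    ∑ x, (F i x - ∑ y, F i y * expFamDensity C F θ y) *
      (F j x - ∑ y, F j y * expFamDensity C F θ y) * expFamDensity C F θ x

namespace CramerRaoAux

variable {m n : ℕ}

/-- The continuous linear functional `θ ↦ ∑ i, θ i * F i y`. -/
noncomputable def L (F : Fin n → Fin m → ℝ) (y : Fin m) : (Fin n → ℝ) →L[ℝ] ℝ :=
  ∑ i, F i y • ContinuousLinearMap.proj i

lemma L_apply (F : Fin n → Fin m → ℝ) (y : Fin m) (v : Fin n → ℝ) :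
    L F y v = ∑ i, F i y * v i := by
  simp [L]

lemma L_apply_single (F : Fin n → Fin m → ℝ) (y : Fin m) (i : Fin n) :
    L F y (Pi.single i 1) = F i y := by
  rw [L_apply]
  simp [Pi.single_apply, mul_ite]

lemma Z_pos (C : Fin m → ℝ) (F : Fin n → Fin m → ℝ) (hm : Nonempty (Fin m)) (θ : Fin n → ℝ) :
    0 < ∑ y, Real.exp (C y + ∑ i, θ i * F i y) :=
  Finset.sum_pos (fun y _ => Real.exp_pos _) Finset.univ_nonempty

lemma density_eq (C : Fin m → ℝ) (F : Fin n → Fin m → ℝ) (hm : Nonempty (Fin m))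
    (θ : Fin n → ℝ) (x : Fin m) :
    expFamDensity C F θ x =
      Real.exp (C x + ∑ i, θ i * F i x) / (∑ y, Real.exp (C y + ∑ i, θ i * F i y)) := by
  rw [expFamDensity, Real.exp_sub, Real.exp_log (Z_pos C F hm θ)]

lemma sum_density (C : Fin m → ℝ) (F : Fin n → Fin m → ℝ) (hm : Nonempty (Fin m))
    (θ : Fin n → ℝ) : ∑ x, expFamDensity C F θ x = 1 := by
  have hZ := Z_pos C F hm θ
  calc ∑ x, expFamDensity C F θ x
      = (∑ x, Real.exp (C x + ∑ i, θ i * F i x)) / (∑ y, Real.exp (C y + ∑ i, θ i * F i y)) := by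
        rw [Finset.sum_div]
        exact Finset.sum_congr rfl fun x _ => density_eq C F hm θ x
    _ = 1 := div_self hZ.ne'

lemma hasFDerivAt_lin (F : Fin n → Fin m → ℝ) (C : Fin m → ℝ) (θ : Fin n → ℝ) (y : Fin m) :
    HasFDerivAt (fun θ : Fin n → ℝ => C y + ∑ i, θ i * F i y) (L F y) θ := by
  have h : HasFDerivAt (fun θ : Fin n → ℝ => ∑ i, θ i * F i y) (L F y) θ := by
    have := HasFDerivAt.fun_sum (u := Finset.univ)
      (A := fun i (θ : Fin n → ℝ) => θ i * F i y)
      (A' := fun i => F i y • ContinuousLinearMap.proj i) (x := θ)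
      (fun i _ => ((ContinuousLinearMap.proj i : (Fin n → ℝ) →L[ℝ] ℝ)).hasFDerivAt.mul_const (F i y))
    exact this
  simpa using (hasFDerivAt_const (C y) θ).fun_add h

lemma hasFDerivAt_density (C : Fin m → ℝ) (F : Fin n → Fin m → ℝ) (hm : Nonempty (Fin m))
    (θ : Fin n → ℝ) (x : Fin m) :
    HasFDerivAt (fun θ => expFamDensity C F θ x)
      (expFamDensity C F θ x • (L F x - ∑ y, expFamDensity C F θ y • L F y)) θ := by
  have hZ := Z_pos C F hm θ
  have hZd : HasFDerivAt (fun θ : Fin n → ℝ => ∑ y, Real.exp (C y + ∑ i, θ i * F i y))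
      (∑ y, Real.exp (C y + ∑ i, θ i * F i y) • L F y) θ :=
    HasFDerivAt.fun_sum fun y _ => (hasFDerivAt_lin F C θ y).exp
  have hlog := hZd.log hZ.ne'
  have hmain := ((hasFDerivAt_lin F C θ x).sub hlog).exp
  have hrw : (∑ y, Real.exp (C y + ∑ i, θ i * F i y))⁻¹ •
      (∑ y, Real.exp (C y + ∑ i, θ i * F i y) • L F y) = ∑ y, expFamDensity C F θ y • L F y := by
    rw [Finset.smul_sum]
    refine Finset.sum_congr rfl fun y _ => ?_
    rw [smul_smul, density_eq C F hm θ y, div_eq_mul_inv, mul_comm]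
  rw [hrw] at hmain
  exact hmain

lemma fderiv_f (C : Fin m → ℝ) (F : Fin n → Fin m → ℝ) (hm : Nonempty (Fin m))
    (X : Fin m → ℝ) (θ : Fin n → ℝ) (i : Fin n) :
    fderiv ℝ (fun θ => ∑ x, X x * expFamDensity C F θ x) θ (Pi.single i 1) =
      ∑ x, X x * expFamDensity C F θ x * (F i x - ∑ y, F i y * expFamDensity C F θ y) := by
  have h : HasFDerivAt (fun θ => ∑ x, X x * expFamDensity C F θ x)
      (∑ x, X x • (expFamDensity C F θ x • (L F x - ∑ y, expFamDensity C F θ y • L F y))) θ :=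
    HasFDerivAt.fun_sum fun x _ => (hasFDerivAt_density C F hm θ x).const_mul (X x)
  rw [h.fderiv]
  simp only [ContinuousLinearMap.coe_sum', Finset.sum_apply, ContinuousLinearMap.coe_smul',
    Pi.smul_apply, ContinuousLinearMap.coe_sub', Pi.sub_apply, L_apply_single, smul_eq_mul]
  refine Finset.sum_congr rfl fun x _ => ?_
  rw [show ∑ y, expFamDensity C F θ y * F i y = ∑ y, F i y * expFamDensity C F θ y from
    Finset.sum_congr rfl fun y _ => mul_comm _ _]
  ring

end CramerRaoAux

open CramerRaoAux

/-- Cramér–Rao equality: for `X = a₀ + ∑ aᵢ Fᵢ ∈ A_E` and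
`f(θ) = E_{p_θ}(X)`, the squared norm of the Riemannian gradient of `f` with respect to the
Fisher metric, namely `∑_{i,j} (h_F⁻¹)_{ij} ∂ᵢf ∂ⱼf`, equals the variance `V_{p_θ}(X)`. -/
theorem cramer_rao_equality
    {m n : ℕ} (C : Fin m → ℝ) (F : Fin n → Fin m → ℝ)
    (hindep : LinearIndependent ℝ (Fin.cons (fun _ => (1 : ℝ)) F : Fin (n + 1) → Fin m → ℝ))
    (a₀ : ℝ) (a : Fin n → ℝ) (X : Fin m → ℝ)
    (hX : X = fun x => a₀ + ∑ i, a i * F i x)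
    (f : (Fin n → ℝ) → ℝ)
    (hf : f = fun θ => ∑ x, X x * expFamDensity C F θ x)
    (θ : Fin n → ℝ) :
    ∑ i, ∑ j, (fisherMatrix C F θ)⁻¹ i j *
        (fderiv ℝ f θ (Pi.single i 1)) * (fderiv ℝ f θ (Pi.single j 1)) =
      ∑ x, (X x - f θ) ^ 2 * expFamDensity C F θ x := by
  classical
  have hm : Nonempty (Fin m) := by
    by_contra h
    refine hindep.ne_zero 0 ?_
    funext x
    exact absurd ⟨x⟩ h
  set p : Fin m → ℝ := expFamDensity C F θ with hp
  set μ : Fin n → ℝ := fun i => ∑ y, F i y * p y with hμ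
  have hppos : ∀ x, 0 < p x := fun x => Real.exp_pos _
  have hpsum : ∑ x, p x = 1 := sum_density C F hm θ
  set G : Matrix (Fin n) (Fin n) ℝ := fisherMatrix C F θ with hG
  have hGdef : ∀ i j, G i j = ∑ x, (F i x - μ i) * (F j x - μ j) * p x := fun i j => rfl
  have hGsymm : ∀ i j, G i j = G j i := by
    intro i j
    rw [hGdef, hGdef]
    exact Finset.sum_congr rfl fun x _ => by ring
  -- derivative of f
  have hD : ∀ i, fderiv ℝ f θ (Pi.single i 1) = ∑ x, X x * p x * (F i x - μ i) := by
    intro i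
    rw [hf]
    exact fderiv_f C F hm X θ i
  -- value of f
  have hfθ : f θ = a₀ + ∑ j, a j * μ j := by
    rw [hf]
    simp only [hX]
    calc ∑ x, (a₀ + ∑ j, a j * F j x) * p x
        = ∑ x, (a₀ * p x + ∑ j, a j * (F j x * p x)) := by
          refine Finset.sum_congr rfl fun x _ => ?_
          rw [add_mul, Finset.sum_mul]
          congr 1
          exact Finset.sum_congr rfl fun j _ => by ring
      _ = a₀ * ∑ x, p x + ∑ j, a j * μ j := by
          rw [Finset.sum_add_distrib, ← Finset.mul_sum, Finset.sum_comm]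
          congr 1
          exact Finset.sum_congr rfl fun j _ => by rw [← Finset.mul_sum]
      _ = a₀ + ∑ j, a j * μ j := by rw [hpsum, mul_one]
  have hcent : ∀ x, X x - f θ = ∑ j, a j * (F j x - μ j) := by
    intro x
    have h1 : ∑ j, a j * (F j x - μ j) = ∑ j, a j * F j x - ∑ j, a j * μ j := by
      rw [← Finset.sum_sub_distrib]
      exact Finset.sum_congr rfl fun j _ => by ring
    simp only [hX]
    rw [hfθ, h1]
    ring
  have hzero : ∀ i, ∑ x, (F i x - μ i) * p x = 0 := by
    intro i
    have h1 : ∑ x, (F i x - μ i) * p x = (∑ x, F i x * p x) - μ i * ∑ x, p x := by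
      rw [Finset.mul_sum, ← Finset.sum_sub_distrib]
      exact Finset.sum_congr rfl fun x _ => by ring
    rw [h1, hpsum, mul_one]
    exact sub_self _
  have hDa : ∀ i, fderiv ℝ f θ (Pi.single i 1) = ∑ j, a j * G j i := by
    intro i
    rw [hD i]
    have h1 : ∑ x, X x * p x * (F i x - μ i)
        = ∑ x, (X x - f θ) * (F i x - μ i) * p x + f θ * ∑ x, (F i x - μ i) * p x := by
      rw [Finset.mul_sum, ← Finset.sum_add_distrib]
      exact Finset.sum_congr rfl fun x _ => by ring
    rw [h1, hzero i, mul_zero, add_zero]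
    calc ∑ x, (X x - f θ) * (F i x - μ i) * p x
        = ∑ x, ∑ j, a j * ((F j x - μ j) * (F i x - μ i) * p x) := by
          refine Finset.sum_congr rfl fun x _ => ?_
          rw [hcent x, Finset.sum_mul, Finset.sum_mul]
          exact Finset.sum_congr rfl fun j _ => by ring
      _ = ∑ j, a j * G j i := by
          rw [Finset.sum_comm]
          exact Finset.sum_congr rfl fun j _ => by rw [hGdef, Finset.mul_sum]
  -- quadratic form identity
  have hbil : ∀ v : Fin n → ℝ,
      ∑ x, (∑ i, v i * (F i x - μ i)) ^ 2 * p x = ∑ i, ∑ j, v i * v j * G i j := by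
    intro v
    calc ∑ x, (∑ i, v i * (F i x - μ i)) ^ 2 * p x
        = ∑ x, ∑ i, ∑ j, v i * v j * ((F i x - μ i) * (F j x - μ j) * p x) := by
          refine Finset.sum_congr rfl fun x _ => ?_
          rw [sq, Finset.sum_mul_sum, Finset.sum_mul]
          refine Finset.sum_congr rfl fun i _ => ?_
          rw [Finset.sum_mul]
          exact Finset.sum_congr rfl fun j _ => by ring
      _ = ∑ i, ∑ j, v i * v j * G i j := by
          rw [Finset.sum_comm]
          refine Finset.sum_congr rfl fun i _ => ?_
          rw [Finset.sum_comm]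
          refine Finset.sum_congr rfl fun j _ => ?_
          rw [hGdef, Finset.mul_sum]
  have e1 : ∀ (M : Matrix (Fin n) (Fin n) ℝ) (v w : Fin n → ℝ),
      v ⬝ᵥ M *ᵥ w = ∑ i, ∑ j, v i * w j * M i j := by
    intro M v w
    simp only [dotProduct, Matrix.mulVec, Finset.mul_sum]
    exact Finset.sum_congr rfl fun i _ => Finset.sum_congr rfl fun j _ => by ring
  -- positive definiteness
  have hPD : G.PosDef := by
    refine Matrix.PosDef.of_dotProduct_mulVec_pos ?_ ?_
    · ext i j
      simp only [Matrix.conjTranspose_apply, star_trivial]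
      exact hGsymm j i
    · intro v hv
      have hsv : star v = v := by
        funext i
        simp
      rw [hsv, e1, ← hbil v]
      refine Finset.sum_pos' (fun x _ => mul_nonneg (sq_nonneg _) (hppos x).le) ?_
      by_contra hcon
      push_neg at hcon
      have hall : ∀ x, ∑ i, v i * (F i x - μ i) = 0 := by
        intro x
        have h1 := hcon x (Finset.mem_univ x)
        have h2 : (∑ i, v i * (F i x - μ i)) ^ 2 ≤ 0 := by
          nlinarith [hppos x, sq_nonneg (∑ i, v i * (F i x - μ i))]
        exact sq_eq_zero_iff.mp (le_antisymm h2 (sq_nonneg _))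
      set g : Fin (n + 1) → ℝ := Fin.cons (-∑ i, v i * μ i) v with hg
      have hsum : ∑ k, g k • (Fin.cons (fun _ => (1 : ℝ)) F : Fin (n + 1) → Fin m → ℝ) k = 0 := by
        funext x
        simp only [Finset.sum_apply, Pi.smul_apply, Pi.zero_apply, Fin.sum_univ_succ,
          Fin.cons_zero, Fin.cons_succ, hg, smul_eq_mul]
        have h1 : ∑ i, v i * F i x - ∑ i, v i * μ i = 0 := by
          rw [← Finset.sum_sub_distrib]
          rw [← hall x]
          exact Finset.sum_congr rfl fun i _ => by ring
        linarith
      have hz := Fintype.linearIndependent_iff.mp hindep g hsum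
      apply hv
      funext i
      have := hz i.succ
      simpa [hg] using this
  have hdet : IsUnit G.det := hPD.det_pos.ne'.isUnit
  have hinv : G⁻¹ * G = 1 := Matrix.nonsing_inv_mul G hdet
  have hDa2 : ∀ i, fderiv ℝ f θ (Pi.single i 1) = (G *ᵥ a) i := by
    intro i
    rw [hDa i]
    simp only [Matrix.mulVec, dotProduct]
    exact Finset.sum_congr rfl fun j _ => by rw [hGsymm j i]; ring
  calc ∑ i, ∑ j, G⁻¹ i j * (fderiv ℝ f θ (Pi.single i 1)) * (fderiv ℝ f θ (Pi.single j 1))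
      = (G *ᵥ a) ⬝ᵥ (G⁻¹ *ᵥ (G *ᵥ a)) := by
        rw [e1]
        exact Finset.sum_congr rfl fun i _ => Finset.sum_congr rfl fun j _ => by
          rw [hDa2 i, hDa2 j]; ring
    _ = (G *ᵥ a) ⬝ᵥ a := by rw [Matrix.mulVec_mulVec, hinv, Matrix.one_mulVec]
    _ = ∑ i, ∑ j, a i * a j * G i j := by
        simp only [dotProduct, Matrix.mulVec, Finset.sum_mul]
        exact Finset.sum_congr rfl fun i _ => Finset.sum_congr rfl fun j _ => by ring
    _ = ∑ x, (X x - f θ) ^ 2 * p x := by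
        rw [← hbil a]
        exact Finset.sum_congr rfl fun x _ => by rw [hcent x]
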